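/- arXiv:2006.13587 — 2 statements merged into one kernel-verified Lean document; each statement's English description precedes it below -/
import Mathlib

section
/- Let A be a real m × m matrix with all entries strictly positive. Then A has a simple eigenvalue λ₁ > 0 such that every other eigenvalue μ (over ℂ) satisfies |μ| < λ₁. -/
open Polynomial

open Matrix Finset Polynomial

lemma continuousOn_finset_inf' {α ι : Type*} [TopologicalSpace α]
    {s : Finset ι} (hs : s.Nonempty) {f : ι → α → ℝ} {K : Set α}
    (hf : ∀ i ∈ s, ContinuousOn (f i) K) :
    ContinuousOn (fun x => s.inf' hs fun i => f i x) K := by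
  induction hs using Finset.Nonempty.cons_induction with
  | singleton a =>
      simp only [Finset.inf'_singleton]
      exact hf a (by simp)
  | cons a s h hs IH =>
      simp only [Finset.inf'_cons (H := hs)]
      exact (hf a (by simp)).inf (IH fun i hi => hf i (by simp [hi]))

theorem perron_exists {m : ℕ} (hm : 0 < m) (A : Matrix (Fin m) (Fin m) ℝ)
    (hA : ∀ i j, 0 < A i j) :
    ∃ (l : ℝ) (x : Fin m → ℝ), 0 < l ∧ (∀ i, 0 < x i) ∧ A.mulVec x = l • x := by
  haveI : NeZero m := ⟨hm.ne'⟩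
  haveI : Nonempty (Fin m) := ⟨⟨0, hm⟩⟩
  have hne : (univ : Finset (Fin m)).Nonempty := univ_nonempty
  have hnep : (univ : Finset (Fin m × Fin m)).Nonempty := univ_nonempty
  set amin : ℝ := univ.inf' hnep (fun p : Fin m × Fin m => A p.1 p.2) with hamin
  set amax : ℝ := univ.sup' hnep (fun p : Fin m × Fin m => A p.1 p.2) with hamax
  have hamin_pos : 0 < amin := by
    rw [hamin, Finset.lt_inf'_iff]
    exact fun p _ => hA p.1 p.2
  have hamin_le : ∀ i j, amin ≤ A i j := fun i j => Finset.inf'_le (fun p : Fin m × Fin m => A p.1 p.2) (Finset.mem_univ (i,j))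
  have hle_amax : ∀ i j, A i j ≤ amax := fun i j => Finset.le_sup' (f := fun p : Fin m × Fin m => A p.1 p.2) (by simp : (i,j) ∈ univ)
  have hamax_pos : 0 < amax := (hA ⟨0, hm⟩ ⟨0, hm⟩).trans_le (hle_amax _ _)
  have hm' : (0:ℝ) < m := by exact_mod_cast hm
  set δ : ℝ := min (amin / (amax * m)) (m:ℝ)⁻¹ with hδ
  have hδ_pos : 0 < δ := lt_min (div_pos hamin_pos (mul_pos hamax_pos hm')) (inv_pos.2 hm')
  set K : Set (Fin m → ℝ) := Set.Icc (fun _ => δ) (fun _ => (1:ℝ)) ∩ {x | ∑ i, x i = 1} with hK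
  have hK_mem : ∀ x ∈ K, (∀ i, δ ≤ x i) ∧ (∑ i, x i = 1) := by
    rintro x ⟨⟨h1, _⟩, h2⟩
    exact ⟨fun i => h1 i, h2⟩
  -- compactness
  have hK_cpt : IsCompact K := by
    refine (isCompact_Icc).inter_right (isClosed_eq ?_ continuous_const)
    exact continuous_finset_sum _ fun i _ => continuous_apply i
  -- nonempty
  have hK_ne : K.Nonempty := by
    refine ⟨fun _ => (m:ℝ)⁻¹, ⟨⟨fun i => min_le_right _ _, fun i => ?_⟩, ?_⟩⟩
    · simp only
      rw [inv_le_one_iff₀]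
      right; exact_mod_cast hm
    · simp [Finset.sum_const, mul_inv_cancel₀ hm'.ne']
  -- closure property
  have key : ∀ y : Fin m → ℝ, (∀ i, 0 ≤ y i) → y ≠ 0 →
      (∑ i, A.mulVec y i)⁻¹ • (A.mulVec y) ∈ K := by
    intro y hy0 hyne
    set s := ∑ j, y j with hs
    have hs_pos : 0 < s := by
      obtain ⟨j, hj⟩ := Function.ne_iff.1 hyne
      exact Finset.sum_pos' (fun j _ => hy0 j) ⟨j, by simp, lt_of_le_of_ne (hy0 j) (Ne.symm hj)⟩
    have hAy_lb : ∀ i, amin * s ≤ A.mulVec y i := by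
      intro i
      rw [mulVec, dotProduct, hs, Finset.mul_sum]
      exact Finset.sum_le_sum fun j _ => mul_le_mul_of_nonneg_right (hamin_le i j) (hy0 j)
    have hAy_ub : ∀ i, A.mulVec y i ≤ amax * s := by
      intro i
      rw [mulVec, dotProduct, hs, Finset.mul_sum]
      exact Finset.sum_le_sum fun j _ => mul_le_mul_of_nonneg_right (hle_amax i j) (hy0 j)
    have hAy_pos : ∀ i, 0 < A.mulVec y i := fun i => (mul_pos hamin_pos hs_pos).trans_le (hAy_lb i)
    set T := ∑ i, A.mulVec y i with hT
    have hT_pos : 0 < T := Finset.sum_pos (fun i _ => hAy_pos i) hne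
    have hT_ub : T ≤ amax * m * s := by
      calc T ≤ ∑ _i : Fin m, amax * s := Finset.sum_le_sum fun i _ => hAy_ub i
        _ = amax * m * s := by simp [Finset.sum_const]; ring
    refine ⟨⟨fun i => ?_, fun i => ?_⟩, ?_⟩
    · -- δ ≤ normalized
      simp only [Pi.smul_apply, smul_eq_mul]
      refine le_trans (min_le_left _ _) ?_
      rw [inv_mul_eq_div, div_le_div_iff₀ (mul_pos hamax_pos hm') hT_pos]
      nlinarith [mul_le_mul_of_nonneg_left hT_ub hamin_pos.le,
        mul_le_mul_of_nonneg_right (hAy_lb i) (mul_pos hamax_pos hm').le]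
    · simp only [Pi.smul_apply, smul_eq_mul]
      rw [inv_mul_eq_div, div_le_one hT_pos]
      exact Finset.single_le_sum (f := fun i => A.mulVec y i) (fun i _ => (hAy_pos i).le) (mem_univ i)
    · show ∑ i, (T⁻¹ • A.mulVec y) i = 1
      simp only [Pi.smul_apply, smul_eq_mul, ← Finset.mul_sum]
      exact inv_mul_cancel₀ hT_pos.ne'
  -- the function to maximize
  set f : (Fin m → ℝ) → ℝ := fun x => univ.inf' hne fun i => A.mulVec x i / x i with hf
  have hf_cont : ContinuousOn f K := by
    refine continuousOn_finset_inf' hne fun i _ => ContinuousOn.div ?_ ?_ ?_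
    · exact (continuous_finset_sum _ fun j _ => (continuous_const.mul (continuous_apply j) : Continuous fun x : Fin m → ℝ => A i j * x j)).continuousOn.congr
        (fun x _ => by rw [mulVec, dotProduct]; rfl)
    · exact (continuous_apply i).continuousOn
    · exact fun x hxK => (hδ_pos.trans_le ((hK_mem x hxK).1 i)).ne'
  obtain ⟨x, hxK, hxmax⟩ := hK_cpt.exists_isMaxOn hK_ne hf_cont
  have hx_pos : ∀ i, 0 < x i := fun i => hδ_pos.trans_le ((hK_mem x hxK).1 i)
  have hx_ne : x ≠ 0 := fun h => (hx_pos ⟨0, hm⟩).ne' (by rw [h]; rfl)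
  set l : ℝ := f x with hl
  have hAx_pos : ∀ i, 0 < A.mulVec x i := by
    intro i
    rw [mulVec, dotProduct]
    exact Finset.sum_pos (fun j _ => mul_pos (hA i j) (hx_pos j)) hne
  have hl_pos : 0 < l := by
    rw [hl, hf, Finset.lt_inf'_iff]
    exact fun i _ => div_pos (hAx_pos i) (hx_pos i)
  have hl_le : ∀ i, l * x i ≤ A.mulVec x i := by
    intro i
    have h := Finset.inf'_le (fun i => A.mulVec x i / x i) (mem_univ i)
    have h2 : l ≤ A.mulVec x i / x i := h
    exact (le_div_iff₀ (hx_pos i)).1 h2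
  refine ⟨l, x, hl_pos, hx_pos, ?_⟩
  by_contra hne'
  set u := A.mulVec x with hu
  have hy0 : ∀ i, 0 ≤ u i - l * x i := fun i => sub_nonneg.2 (hl_le i)
  have hy_ne : (u - l • x) ≠ 0 := fun h => hne' (by rwa [sub_eq_zero] at h)
  have hAy_pos : ∀ i, 0 < A.mulVec (u - l • x) i := by
    intro i
    rw [mulVec, dotProduct]
    obtain ⟨j, hj⟩ := Function.ne_iff.1 hy_ne
    refine Finset.sum_pos' (fun j _ => mul_nonneg (hA i j).le ?_) ⟨j, mem_univ j, ?_⟩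
    · simpa using hy0 j
    · refine mul_pos (hA i j) ?_
      have := hy0 j
      simp only [Pi.sub_apply, Pi.smul_apply, smul_eq_mul] at hj ⊢
      exact lt_of_le_of_ne this (by simpa using Ne.symm hj)
  have hstrict : ∀ i, l * u i < A.mulVec u i := by
    intro i
    have h1 : A.mulVec (u - l • x) i = A.mulVec u i - l * A.mulVec x i := by
      rw [A.mulVec_sub, A.mulVec_smul]
      simp
    have := hAy_pos i
    rw [h1, ← hu] at this
    linarith
  have hu_pos : ∀ i, 0 < u i := hAx_pos
  set w := (∑ i, A.mulVec x i)⁻¹ • (A.mulVec x) with hw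
  have hwK : w ∈ K := key x (fun i => (hx_pos i).le) hx_ne
  have hT_pos : 0 < ∑ i, A.mulVec x i := Finset.sum_pos (fun i _ => hAx_pos i) hne
  have hfw : l < f w := by
    rw [hf, Finset.lt_inf'_iff]
    intro i _
    have hmv : A.mulVec w i = (∑ i, A.mulVec x i)⁻¹ * A.mulVec u i := by
      rw [hw, A.mulVec_smul]; simp [hu]
    have hwi : w i = (∑ i, A.mulVec x i)⁻¹ * u i := by simp [hw, hu]
    rw [hmv, hwi, mul_div_mul_left _ _ (inv_pos.2 hT_pos).ne', lt_div_iff₀ (hu_pos i)]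
    exact hstrict i
  exact hfw.not_ge (hxmax hwK)

lemma spectrum_iff_eigen {m : ℕ} [NeZero m] (M : Matrix (Fin m) (Fin m) ℂ) (μ : ℂ) :
    μ ∈ spectrum ℂ M ↔ ∃ v : Fin m → ℂ, v ≠ 0 ∧ M.mulVec v = μ • v := by
  rw [← AlgEquiv.spectrum_eq (Matrix.toLinAlgEquiv' (R := ℂ) (n := Fin m)) M,
    ← Module.End.hasEigenvalue_iff_mem_spectrum, Module.End.hasEigenvalue_iff,
    Submodule.ne_bot_iff]
  constructor
  · rintro ⟨v, hv, hv0⟩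
    rw [Module.End.mem_eigenspace_iff] at hv
    refine ⟨v, hv0, ?_⟩
    rwa [Matrix.toLinAlgEquiv'_apply] at hv
  · rintro ⟨v, hv0, hv⟩
    refine ⟨v, ?_, hv0⟩
    rw [Module.End.mem_eigenspace_iff, Matrix.toLinAlgEquiv'_apply]
    exact hv

lemma triangle_eq_case {ι : Type*} [Fintype ι] (z : ι → ℂ)
    (h : ‖∑ j, z j‖ = ∑ j, ‖z j‖)
    (hS : (∑ j, z j) ≠ 0) :
    ∃ c : ℂ, ‖c‖ = 1 ∧ ∀ j, z j = (‖z j‖ : ℂ) * c := by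
  set S := ∑ j, z j with hSdef
  set c : ℂ := S / (‖S‖ : ℂ) with hc
  have habsS : (0:ℝ) < ‖S‖ := norm_pos_iff.mpr hS
  have hcabs : ‖c‖ = 1 := by
    rw [hc, norm_div, Complex.norm_real, norm_norm, div_self habsS.ne']
  refine ⟨c, hcabs, ?_⟩
  have hle : ∀ j, ((starRingEnd ℂ) c * z j).re ≤ ‖z j‖ := by
    intro j
    refine (Complex.re_le_norm _).trans (le_of_eq ?_)
    rw [norm_mul, Complex.norm_conj, hcabs, one_mul]
  have hsum : ∑ j, ((starRingEnd ℂ) c * z j).re = ∑ j, ‖z j‖ := by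
    rw [← Complex.re_sum, ← Finset.mul_sum, ← hSdef]
    have : (starRingEnd ℂ) c * S = (‖S‖ : ℂ) := by
      rw [hc, map_div₀, Complex.conj_ofReal, div_mul_eq_mul_div, mul_comm,
        Complex.mul_conj, Complex.normSq_eq_norm_sq]
      rw [div_eq_iff (by exact_mod_cast habsS.ne')]
      push_cast
      ring
    rw [this, Complex.ofReal_re, h]
  have heq : ∀ j ∈ (Finset.univ : Finset ι), ((starRingEnd ℂ) c * z j).re = ‖z j‖ :=
    (Finset.sum_eq_sum_iff_of_le fun j _ => hle j).1 hsum
  intro j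
  have h1 : ((starRingEnd ℂ) c * z j).re = ‖(starRingEnd ℂ) c * z j‖ := by
    rw [norm_mul, Complex.norm_conj, hcabs, one_mul]; exact heq j (Finset.mem_univ j)
  set w := (starRingEnd ℂ) c * z j with hw
  have him : w.im = 0 := by
    have h2 := Complex.sq_norm w
    rw [Complex.normSq_apply, ← h1] at h2
    nlinarith [sq_nonneg w.im]
  have hwre : w = (‖z j‖ : ℂ) := by
    have : w = (w.re : ℂ) := by
      apply Complex.ext <;> simp [him]
    rw [this, heq j (Finset.mem_univ j)]
  have hccc : c * (starRingEnd ℂ) c = 1 := by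
    rw [Complex.mul_conj, Complex.normSq_eq_norm_sq, hcabs]; norm_num
  calc z j = c * (starRingEnd ℂ) c * z j := by rw [hccc, one_mul]
    _ = c * w := by rw [hw]; ring
    _ = (‖z j‖ : ℂ) * c := by rw [hwre]; ring

lemma charpoly_comp_X_add_C {n : Type*} [DecidableEq n] [Fintype n] {R : Type*} [CommRing R]
    (M : Matrix n n R) (a : R) :
    M.charpoly.comp (X + C a) = (M - a • (1 : Matrix n n R)).charpoly := by
  unfold Matrix.charpoly
  have : (Matrix.charmatrix M).map (eval₂RingHom C (X + C a)) = Matrix.charmatrix (M - a • 1) := by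
    ext i j
    by_cases hij : i = j
    · subst hij
      simp [Matrix.charmatrix_apply_eq, Matrix.map_apply, Matrix.sub_apply, Matrix.smul_apply,
        Matrix.one_apply_eq, C_sub]
      ring
    · simp [Matrix.charmatrix_apply_ne _ _ _ hij, Matrix.map_apply, Matrix.sub_apply,
        Matrix.smul_apply, Matrix.one_apply_ne hij, hij]
  rw [Polynomial.comp, ← coe_eval₂RingHom, RingHom.map_det, RingHom.mapMatrix_apply, this]

section aux
variable {m : ℕ}

lemma dot_mulVec {R : Type*} [CommRing R] (A : Matrix (Fin m) (Fin m) R)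
    (w v : Fin m → R) : ∑ i, w i * (A.mulVec v) i = ∑ j, (Aᵀ.mulVec w) j * v j := by
  simp only [mulVec, dotProduct, transpose_apply, Finset.mul_sum, Finset.sum_mul]
  rw [Finset.sum_comm]
  exact Finset.sum_congr rfl fun i _ => Finset.sum_congr rfl fun j _ => by ring

lemma mulVec_map_cast (A : Matrix (Fin m) (Fin m) ℝ) (y : Fin m → ℝ) :
    (A.map (algebraMap ℝ ℂ)).mulVec (fun i => (y i : ℂ)) = fun i => ((A.mulVec y i : ℝ) : ℂ) := by
  funext i
  simp only [mulVec, dotProduct, Matrix.map_apply, Complex.coe_algebraMap]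
  push_cast
  rfl

lemma real_eigen_unique (hm : 0 < m) (A : Matrix (Fin m) (Fin m) ℝ)
    (hA : ∀ i j, 0 < A i j) (l : ℝ) (hl : 0 < l) (x : Fin m → ℝ) (hx : ∀ i, 0 < x i)
    (hAx : A.mulVec x = l • x) (y : Fin m → ℝ) (hAy : A.mulVec y = l • y) :
    ∃ t : ℝ, y = t • x := by
  haveI : Nonempty (Fin m) := ⟨⟨0, hm⟩⟩
  have hne : (univ : Finset (Fin m)).Nonempty := univ_nonempty
  set t : ℝ := univ.inf' hne fun i => y i / x i with ht
  obtain ⟨k, -, hk⟩ := Finset.exists_mem_eq_inf' hne fun i => y i / x i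
  refine ⟨t, ?_⟩
  by_contra hne'
  set z : Fin m → ℝ := y - t • x with hz
  have hz_ne : z ≠ 0 := fun h => hne' (by rw [← sub_eq_zero]; exact h)
  have hz0 : ∀ i, 0 ≤ z i := by
    intro i
    have : t ≤ y i / x i := Finset.inf'_le _ (mem_univ i)
    have := (le_div_iff₀ (hx i)).1 this
    simp only [hz, Pi.sub_apply, Pi.smul_apply, smul_eq_mul]
    linarith
  have hzk : z k = 0 := by
    simp only [hz, Pi.sub_apply, Pi.smul_apply, smul_eq_mul]
    rw [← ht] at hk
    rw [hk, div_mul_cancel₀ _ (hx k).ne']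
    ring
  have hAz : A.mulVec z = l • z := by
    rw [hz, A.mulVec_sub, A.mulVec_smul, hAx, hAy, smul_sub, smul_smul, smul_smul, mul_comm]
  have hAz_pos : 0 < A.mulVec z k := by
    obtain ⟨j, hj⟩ := Function.ne_iff.1 hz_ne
    rw [mulVec, dotProduct]
    exact Finset.sum_pos' (fun j _ => mul_nonneg (hA k j).le (hz0 j))
      ⟨j, mem_univ j, mul_pos (hA k j) (lt_of_le_of_ne (hz0 j) (Ne.symm hj))⟩
  rw [hAz] at hAz_pos
  simp only [Pi.smul_apply, smul_eq_mul, hzk, mul_zero] at hAz_pos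
  exact lt_irrefl 0 hAz_pos

lemma eigen_abs (hm : 0 < m) (A : Matrix (Fin m) (Fin m) ℝ) (hA : ∀ i j, 0 < A i j)
    (l : ℝ) (hl : 0 < l)
    (x : Fin m → ℝ) (hx : ∀ i, 0 < x i) (hAx : A.mulVec x = l • x)
    (w : Fin m → ℝ) (hw : ∀ i, 0 < w i) (hAw : Aᵀ.mulVec w = l • w)
    (μ : ℂ) (v : Fin m → ℂ) (hv : v ≠ 0)
    (hμv : (A.map (algebraMap ℝ ℂ)).mulVec v = μ • v) :
    ‖μ‖ ≤ l ∧
      (‖μ‖ = l → μ = (l : ℂ) ∧ ∃ t : ℂ, v = t • fun i => (x i : ℂ)) := by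
  haveI : Nonempty (Fin m) := ⟨⟨0, hm⟩⟩
  have hne : (univ : Finset (Fin m)).Nonempty := univ_nonempty
  set b : Fin m → ℝ := fun i => ‖v i‖ with hb
  have hb0 : ∀ i, 0 ≤ b i := fun i => (norm_nonneg _)
  obtain ⟨j₀, hj₀⟩ := Function.ne_iff.1 hv
  have hbj₀ : 0 < b j₀ := by simpa [hb] using norm_pos_iff.mpr hj₀
  have hrow : ∀ i, (A.map (algebraMap ℝ ℂ)).mulVec v i = ∑ j, (A i j : ℂ) * v j := by
    intro i
    simp only [mulVec, dotProduct, Matrix.map_apply, Complex.coe_algebraMap]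
  have habs : ∀ i, ‖μ‖ * b i ≤ A.mulVec b i := by
    intro i
    have h1 : μ * v i = ∑ j, (A i j : ℂ) * v j := by
      rw [← hrow, hμv]; simp
    calc ‖μ‖ * b i = ‖μ * v i‖ := by rw [norm_mul]
      _ = ‖∑ j, (A i j : ℂ) * v j‖ := by rw [h1]
      _ ≤ ∑ j, ‖(A i j : ℂ) * v j‖ := norm_sum_le _ _
      _ = ∑ j, A i j * b j := by
          refine Finset.sum_congr rfl fun j _ => ?_
          rw [norm_mul, Complex.norm_real, Real.norm_eq_abs, abs_of_pos (hA i j)]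
      _ = A.mulVec b i := by rw [mulVec, dotProduct]
  have hWb : 0 < ∑ i, w i * b i :=
    Finset.sum_pos' (fun i _ => mul_nonneg (hw i).le (hb0 i))
      ⟨j₀, mem_univ j₀, mul_pos (hw j₀) hbj₀⟩
  have hpair : ∑ i, w i * A.mulVec b i = l * ∑ i, w i * b i := by
    rw [dot_mulVec, hAw]
    simp only [Pi.smul_apply, smul_eq_mul, Finset.mul_sum]
    exact Finset.sum_congr rfl fun i _ => by ring
  have hle : ‖μ‖ ≤ l := by
    have h2 : ‖μ‖ * ∑ i, w i * b i ≤ l * ∑ i, w i * b i := by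
      rw [← hpair, Finset.mul_sum]
      exact Finset.sum_le_sum fun i _ => by
        have := mul_le_mul_of_nonneg_left (habs i) (hw i).le
        linarith [this]
    exact le_of_mul_le_mul_right (by linarith [h2]) hWb
  refine ⟨hle, fun heq => ?_⟩
  -- equality case
  have hAb : A.mulVec b = l • b := by
    have hsum0 : ∑ i, w i * (A.mulVec b i - l * b i) = 0 := by
      have h5 : ∑ i, w i * (A.mulVec b i - l * b i)
          = ∑ i, w i * A.mulVec b i - l * ∑ i, w i * b i := by
        rw [Finset.mul_sum, ← Finset.sum_sub_distrib]
        exact Finset.sum_congr rfl fun i _ => by ring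
      rw [h5, hpair]; ring
    have hterm := (Finset.sum_eq_zero_iff_of_nonneg (fun i (_ : i ∈ univ) =>
      mul_nonneg (hw i).le (sub_nonneg.2 (heq ▸ habs i)))).1 hsum0
    funext i
    have := hterm i (mem_univ i)
    rcases mul_eq_zero.1 this with h | h
    · exact absurd h (hw i).ne'
    · have : A.mulVec b i = l * b i := by linarith [sub_eq_zero.1 h]
      simpa using this
  have hb_pos : ∀ i, 0 < b i := by
    intro i
    have h6 : 0 < A.mulVec b i := by
      rw [mulVec, dotProduct]
      exact Finset.sum_pos' (fun j _ => mul_nonneg (hA i j).le (hb0 j))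
        ⟨j₀, mem_univ j₀, mul_pos (hA i j₀) hbj₀⟩
    rw [hAb] at h6
    simp only [Pi.smul_apply, smul_eq_mul] at h6
    nlinarith [hb0 i]
  -- triangle equality at row j₀
  set z : Fin m → ℂ := fun j => (A j₀ j : ℂ) * v j with hzdef
  have hZsum : ∑ j, z j = μ * v j₀ := by
    rw [← hrow j₀, hμv]; simp
  have hzabs : ∀ j, ‖z j‖ = A j₀ j * b j := by
    intro j
    rw [hzdef]
    simp only
    rw [norm_mul, Complex.norm_real, Real.norm_eq_abs, abs_of_pos (hA j₀ j)]
  have habs_eq : ‖∑ j, z j‖ = ∑ j, ‖z j‖ := by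
    rw [hZsum, norm_mul, heq]
    have h7 : ∑ j, ‖z j‖ = A.mulVec b j₀ := by
      rw [mulVec, dotProduct]
      exact Finset.sum_congr rfl fun j _ => hzabs j
    rw [h7, hAb]
    simp [hb]
  have hSne : (∑ j, z j) ≠ 0 := by
    rw [hZsum]
    have hμne : μ ≠ 0 := by
      intro h
      rw [h] at heq
      simp only [norm_zero] at heq
      linarith
    exact mul_ne_zero hμne hj₀
  obtain ⟨c, hc1, hc⟩ := triangle_eq_case z habs_eq hSne
  have hvc : ∀ j, v j = (b j : ℂ) * c := by
    intro j
    have h8 := hc j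
    rw [hzabs j] at h8
    have hAne : (A j₀ j : ℂ) ≠ 0 := by
      exact_mod_cast (hA j₀ j).ne'
    apply mul_left_cancel₀ hAne
    rw [show (A j₀ j : ℂ) * v j = z j from rfl, h8]
    push_cast
    ring
  have h4 : (A.map (algebraMap ℝ ℂ)).mulVec v = (l : ℂ) • v := by
    funext i
    have h9 : ∑ j, (A i j : ℂ) * (b j : ℂ) = ((A.mulVec b i : ℝ) : ℂ) := by
      rw [mulVec, dotProduct]; push_cast; rfl
    rw [hrow i]
    calc ∑ j, (A i j : ℂ) * v j = (∑ j, (A i j : ℂ) * (b j : ℂ)) * c := by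
          rw [Finset.sum_mul]
          exact Finset.sum_congr rfl fun j _ => by rw [hvc j]; ring
      _ = ((A.mulVec b i : ℝ) : ℂ) * c := by rw [h9]
      _ = (l : ℂ) • v i := by
          rw [hAb]
          simp only [Pi.smul_apply, smul_eq_mul]
          rw [hvc i]
          push_cast
          ring
  have hμl : μ = (l : ℂ) := by
    have h10 : μ • v = (l : ℂ) • v := by rw [← hμv, h4]
    have h11 := congrFun h10 j₀
    simp only [Pi.smul_apply, smul_eq_mul] at h11
    exact mul_right_cancel₀ hj₀ h11
  refine ⟨hμl, ?_⟩
  obtain ⟨t₀, ht₀⟩ := real_eigen_unique hm A hA l hl x hx hAx b hAb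
  refine ⟨(t₀ : ℂ) * c, ?_⟩
  funext j
  rw [hvc j, ht₀]
  simp only [Pi.smul_apply, smul_eq_mul]
  push_cast
  ring
end aux

theorem perron_frobenius_positive_matrix {m : ℕ} (hm : 0 < m)
    (A : Matrix (Fin m) (Fin m) ℝ) (hA : ∀ i j, 0 < A i j) :
    ∃ l : ℝ, 0 < l ∧ (l : ℂ) ∈ spectrum ℂ (A.map (algebraMap ℝ ℂ)) ∧
      (A.map (algebraMap ℝ ℂ)).charpoly.rootMultiplicity (l : ℂ) = 1 ∧
      ∀ μ : ℂ, μ ∈ spectrum ℂ (A.map (algebraMap ℝ ℂ)) → μ ≠ (l : ℂ) →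
        ‖μ‖ < l := by
  haveI : NeZero m := ⟨hm.ne'⟩
  haveI : Nonempty (Fin m) := ⟨⟨0, hm⟩⟩
  obtain ⟨l, x, hl, hx, hAx⟩ := perron_exists hm A hA
  obtain ⟨l', w, hl', hw, hAw'⟩ := perron_exists hm Aᵀ (fun i j => hA j i)
  have hwx : 0 < ∑ i, w i * x i :=
    Finset.sum_pos (fun i _ => mul_pos (hw i) (hx i)) Finset.univ_nonempty
  have hll : l' = l := by
    have h1 : ∑ i, w i * (A.mulVec x) i = l * ∑ i, w i * x i := by
      rw [hAx]
      simp only [Pi.smul_apply, smul_eq_mul, Finset.mul_sum]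
      exact Finset.sum_congr rfl fun i _ => by ring
    have h2 : ∑ i, w i * (A.mulVec x) i = l' * ∑ i, w i * x i := by
      rw [dot_mulVec, hAw']
      simp only [Pi.smul_apply, smul_eq_mul, Finset.mul_sum]
      exact Finset.sum_congr rfl fun i _ => by ring
    exact mul_right_cancel₀ hwx.ne' (h2.symm.trans h1)
  rw [hll] at hAw'
  set Aℂ := A.map (algebraMap ℝ ℂ) with hAℂdef
  set xℂ : Fin m → ℂ := fun i => (x i : ℂ) with hxℂdef
  have hxℂ_ne : xℂ ≠ 0 := by
    intro h
    have := congrFun h ⟨0, hm⟩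
    simp only [hxℂdef, Pi.zero_apply, Complex.ofReal_eq_zero] at this
    exact (hx ⟨0, hm⟩).ne' this
  have hAxℂ : Aℂ.mulVec xℂ = (l : ℂ) • xℂ := by
    rw [hxℂdef, hAℂdef, mulVec_map_cast, hAx]
    funext i
    simp only [Pi.smul_apply, smul_eq_mul]
    push_cast
    ring
  refine ⟨l, hl, ?_, ?_, ?_⟩
  · exact (spectrum_iff_eigen Aℂ l).2 ⟨xℂ, hxℂ_ne, hAxℂ⟩
  · -- algebraic simplicity
    have huniq : ∀ v : Fin m → ℂ, Aℂ.mulVec v = (l : ℂ) • v → ∃ t : ℂ, v = t • xℂ := by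
      intro v hveig
      by_cases hv : v = 0
      · exact ⟨0, by simp [hv]⟩
      · have habsl : ‖(l : ℂ)‖ = l := by
          rw [Complex.norm_real, Real.norm_eq_abs, abs_of_pos hl]
        exact ((eigen_abs hm A hA l hl x hx hAx w hw hAw' (l : ℂ) v hv hveig).2 habsl).2
    set ψ : Module.End ℂ (Fin m → ℂ) := Matrix.toLin' (Aℂ - (l : ℂ) • 1) with hψdef
    have hψapp : ∀ v, ψ v = Aℂ.mulVec v - (l : ℂ) • v := by
      intro v
      rw [hψdef, Matrix.toLin'_apply, Matrix.sub_mulVec, Matrix.smul_mulVec,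
        Matrix.one_mulVec]
    have hwℂ : (Aℂ)ᵀ.mulVec (fun i => (w i : ℂ)) = (l : ℂ) • fun i => (w i : ℂ) := by
      rw [hAℂdef, ← Matrix.transpose_map, mulVec_map_cast, hAw']
      funext i
      simp only [Pi.smul_apply, smul_eq_mul]
      push_cast
      ring
    have hSwx : (∑ i, (w i : ℂ) * xℂ i) ≠ 0 := by
      have h1 : ∑ i, (w i : ℂ) * xℂ i = ((∑ i, w i * x i : ℝ) : ℂ) := by
        rw [hxℂdef]; push_cast; rfl
      rw [h1]
      exact_mod_cast hwx.ne'
    have hker2 : ∀ v, ψ (ψ v) = 0 → ψ v = 0 := by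
      intro v hvv
      have h1 : Aℂ.mulVec (ψ v) = (l : ℂ) • (ψ v) := by
        have h := hψapp (ψ v)
        rw [hvv] at h
        exact sub_eq_zero.1 h.symm
      obtain ⟨t, ht⟩ := huniq (ψ v) h1
      have hz : ∑ i, (w i : ℂ) * (ψ v) i = 0 := by
        have h2 : ∑ i, (w i : ℂ) * (ψ v) i
            = ∑ i, (w i : ℂ) * (Aℂ.mulVec v) i - (l : ℂ) * ∑ i, (w i : ℂ) * v i := by
          rw [Finset.mul_sum, ← Finset.sum_sub_distrib]
          refine Finset.sum_congr rfl fun i _ => ?_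
          rw [hψapp v]
          simp only [Pi.sub_apply, Pi.smul_apply, smul_eq_mul]
          ring
        rw [h2, dot_mulVec, hwℂ]
        simp only [Pi.smul_apply, smul_eq_mul, Finset.mul_sum]
        rw [← Finset.sum_sub_distrib]
        apply Finset.sum_eq_zero
        intro i _
        ring
      rw [ht] at hz
      have h3 : t * ∑ i, (w i : ℂ) * xℂ i = 0 := by
        rw [Finset.mul_sum, ← hz]
        refine Finset.sum_congr rfl fun i _ => ?_
        simp only [Pi.smul_apply, smul_eq_mul]
        ring
      rcases mul_eq_zero.1 h3 with h | h
      · rw [ht, h, zero_smul]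
      · exact absurd h hSwx
    have hkerpow : ∀ (k : ℕ) (v : Fin m → ℂ), (ψ ^ k) v = 0 → ψ v = 0 := by
      intro k
      induction k with
      | zero =>
          intro v h
          simp only [pow_zero, Module.End.one_apply] at h
          rw [h, map_zero]
      | succ k IH =>
          intro v h
          rw [pow_succ, Module.End.mul_apply] at h
          exact hker2 v (IH (ψ v) h)
    have hψx : ψ xℂ = 0 := by
      rw [hψapp, hAxℂ, sub_self]
    have hspan : (Module.End.maxGenEigenspace ψ 0) = Submodule.span ℂ {xℂ} := by
      apply le_antisymm
      · intro v hv
        rw [Module.End.mem_maxGenEigenspace] at hv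
        obtain ⟨k, hk⟩ := hv
        simp only [zero_smul, sub_zero] at hk
        have h1 : ψ v = 0 := hkerpow k v hk
        rw [hψapp v] at h1
        obtain ⟨t, ht⟩ := huniq v (sub_eq_zero.1 h1)
        rw [ht]
        exact Submodule.smul_mem _ _ (Submodule.mem_span_singleton_self _)
      · rw [Submodule.span_le, Set.singleton_subset_iff, SetLike.mem_coe,
          Module.End.mem_maxGenEigenspace]
        exact ⟨1, by simpa [zero_smul, sub_zero, pow_one] using hψx⟩
    have hmat : Aℂ - (l : ℂ) • 1
        = LinearMap.toMatrix (Pi.basisFun ℂ (Fin m)) (Pi.basisFun ℂ (Fin m)) ψ := by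
      rw [LinearMap.toMatrix_eq_toMatrix', hψdef, LinearMap.toMatrix'_toLin']
    have hch : Aℂ.charpoly.rootMultiplicity (l : ℂ)
        = Module.finrank ℂ (Module.End.maxGenEigenspace ψ 0) := by
      rw [Polynomial.rootMultiplicity_eq_natTrailingDegree, charpoly_comp_X_add_C,
        hmat, LinearMap.charpoly_toMatrix, ← LinearMap.finrank_maxGenEigenspace_zero_eq ψ]
    rw [hch, hspan, finrank_span_singleton hxℂ_ne]
  · -- dominance
    intro μ hμ hμne
    obtain ⟨v, hv, hμv⟩ := (spectrum_iff_eigen Aℂ μ).1 hμ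
    obtain ⟨h1, h2⟩ := eigen_abs hm A hA l hl x hx hAx w hw hAw' μ v hv hμv
    rcases lt_or_eq_of_le h1 with h | h
    · exact h
    · exact absurd (h2 h).1 hμne
end

section
/- Let T be a real symmetric m × m matrix and 𝒯 a compact self-adjoint operator with simple dominant eigenvalue λ₁(𝒯) > 0 that is strictly larger in modulus than all other eigenvalues. If the characteristic function μ ↦ det(I − μT) converges to the Fredholm determinant D(μ) of 𝒯 uniformly on a bounded region containing 1/λ₁(𝒯) with error ε_m, and 1/λ₁(T) → 1/λ₁(𝒯), then λ₁(T) − λ₁(𝒯) = (λ₁(𝒯)²/D'(λ₁(𝒯)^{-1})) ε_m(λ₁(𝒯)^{-1}) + O(ε_m²). -/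
open Filter Metric Set

lemma lip_of_bound {g : ℂ → ℂ} {c : ℂ} {R eps : ℝ} (hR : 0 < R)
    (hg : DifferentiableOn ℂ g (ball c R))
    (hb : ∀ z ∈ ball c R, ‖g z‖ ≤ eps) {z : ℂ} (hz : z ∈ ball c R) :
    ‖g z - g c‖ ≤ 3 * eps / R * ‖z - c‖ := by
  have hc : c ∈ ball c R := mem_ball_self hR
  have heps0 : 0 ≤ eps := le_trans (norm_nonneg _) (hb c hc)
  rcases eq_or_lt_of_le heps0 with h0 | hpos
  · have h1 : g z = 0 := norm_le_zero_iff.mp (h0 ▸ hb z hz)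
    have h2 : g c = 0 := norm_le_zero_iff.mp (h0 ▸ hb c hc)
    simp [h1, h2]
    positivity
  · set f : ℂ → ℂ := fun w => g w - g c with hf_def
    have hf : DifferentiableOn ℂ f (ball c R) := hg.sub_const _
    have hmaps : MapsTo f (ball c R) (ball (f c) (3 * eps)) := by
      intro w hw
      rw [mem_ball, dist_eq_norm]
      have : ‖f w - f c‖ ≤ 2 * eps := by
        have h1 := hb w hw
        have h2 := hb c hc
        calc ‖f w - f c‖ = ‖g w - g c‖ := by simp [hf_def]
          _ ≤ ‖g w‖ + ‖g c‖ := norm_sub_le _ _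
          _ ≤ 2 * eps := by linarith
      linarith
    have hds := Complex.norm_dslope_le_div_of_mapsTo_ball hf (hmaps.mono_right ball_subset_closedBall) hz
    have h2 : (z - c) • dslope f c z = f z - f c := sub_smul_dslope f c z
    have : ‖g z - g c‖ = ‖dslope f c z‖ * ‖z - c‖ := by
      calc ‖g z - g c‖ = ‖f z - f c‖ := by simp [hf_def]
        _ = ‖(z - c) • dslope f c z‖ := by rw [h2]
        _ = ‖dslope f c z‖ * ‖z - c‖ := by rw [smul_eq_mul, norm_mul, mul_comm]
    rw [this]
    exact mul_le_mul_of_nonneg_right hds (norm_nonneg _)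

theorem nystrom_eigenvalue_error_expansion
    (D : ℂ → ℂ) (lam₁ : ℝ) (hlam₁ : 0 < lam₁)
    (U : Set ℂ) (hU : IsOpen U) (hmemU : (1 / lam₁ : ℂ) ∈ U)
    (hD : AnalyticOn ℂ D U)
    (hroot : D (1 / lam₁) = 0) (hder : deriv D (1 / lam₁) ≠ 0)
    (Dm : ℕ → ℂ → ℂ) (hDm : ∀ m, AnalyticOn ℂ (Dm m) U)
    (ε : ℕ → ℝ) (hε : Tendsto ε atTop (nhds 0))
    (hbound : ∀ m, ∀ μ ∈ U, ‖Dm m μ - D μ‖ ≤ ε m)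
    (lamT : ℕ → ℝ) (hlamT : ∀ m, 0 < lamT m)
    (hroots : ∀ m, Dm m (1 / lamT m) = 0)
    (htend : Tendsto (fun m => 1 / lamT m) atTop (nhds (1 / lam₁))) :
    ∃ C : ℝ, ∀ᶠ m in atTop,
      ‖((lamT m : ℂ) - (lam₁ : ℂ))
          - (lam₁ ^ 2 / deriv D (1 / lam₁)) * (Dm m (1 / lam₁) - D (1 / lam₁))‖
        ≤ C * (ε m) ^ 2 := by
  set z₀ : ℂ := 1 / (lam₁ : ℂ) with hz₀def
  -- basic nonvanishing facts
  have hlam₁C : (lam₁ : ℂ) ≠ 0 := Complex.ofReal_ne_zero.mpr hlam₁.ne'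
  -- analyticity at points
  have hDN : AnalyticOnNhd ℂ D U := hU.analyticOn_iff_analyticOnNhd.mp hD
  have hDmN : ∀ m, AnalyticOnNhd ℂ (Dm m) U :=
    fun m => hU.analyticOn_iff_analyticOnNhd.mp (hDm m)
  have hDz₀ : AnalyticAt ℂ D z₀ := hDN z₀ hmemU
  -- a closed ball inside U
  obtain ⟨R, hR0, hRU⟩ : ∃ R > 0, closedBall z₀ R ⊆ U := by
    rcases Metric.nhds_basis_closedBall.mem_iff.mp (hU.mem_nhds hmemU) with ⟨R, hR0, hRU⟩
    exact ⟨R, hR0, hRU⟩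
  -- dslope machinery
  set d1 : ℂ → ℂ := dslope D z₀ with hd1def
  set d2 : ℂ → ℂ := dslope d1 z₀ with hd2def
  set δ : ℂ := deriv D z₀ with hδdef
  set κ : ℝ := ‖δ‖ with hκdef
  have hκ : 0 < κ := norm_pos_iff.mpr hder
  have hd1an : AnalyticAt ℂ d1 z₀ := by
    obtain ⟨p, hp⟩ := hDz₀
    exact ⟨p.fslope, hp.has_fpower_series_dslope_fslope⟩
  have hd1cont : ContinuousAt d1 z₀ := continuousAt_dslope_same.mpr hDz₀.differentiableAt
  have hd2cont : ContinuousAt d2 z₀ := continuousAt_dslope_same.mpr hd1an.differentiableAt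
  set M : ℝ := ‖d2 z₀‖ + 1 with hMdef
  have hM0 : 0 < M := by positivity
  have hd1z₀ : d1 z₀ = δ := dslope_same D z₀
  -- eventually facts near z₀
  have ev1 : ∀ᶠ z in nhds z₀, ‖d2 z‖ ≤ M := by
    filter_upwards [hd2cont.norm.eventually (gt_mem_nhds (lt_add_one ‖d2 z₀‖))] with z hz
    exact hz.le
  have ev2 : ∀ᶠ z in nhds z₀, κ / 2 ≤ ‖d1 z‖ := by
    have hlt : κ / 2 < ‖d1 z₀‖ := by rw [hd1z₀]; linarith
    filter_upwards [hd1cont.norm.eventually (lt_mem_nhds hlt)] with z hz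
    exact hz.le
  have ev3 : ∀ᶠ z in nhds z₀, z ∈ ball z₀ R := ball_mem_nhds z₀ hR0
  obtain ⟨r, hr0, hrsub⟩ : ∃ r > 0, ball z₀ r ⊆
      {z | ‖d2 z‖ ≤ M ∧ κ / 2 ≤ ‖d1 z‖ ∧ z ∈ ball z₀ R} := by
    rcases Metric.mem_nhds_iff.mp ((ev1.and (ev2.and ev3)) :
        {z | ‖d2 z‖ ≤ M ∧ κ / 2 ≤ ‖d1 z‖ ∧ z ∈ ball z₀ R} ∈ nhds z₀) with ⟨r, hr0, hrsub⟩
    exact ⟨r, hr0, hrsub⟩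
  -- constants
  set C₂ : ℝ := (3 / R * (2 / κ) + M * (2 / κ) ^ 2) / κ with hC₂def
  refine ⟨lam₁ * (2 * lam₁ * lam₁ * (2 / κ)) * (1 / κ) + 2 * lam₁ * lam₁ * C₂, ?_⟩
  -- eventual facts in m
  have hεnn : ∀ m, 0 ≤ ε m := fun m => le_trans (norm_nonneg _) (hbound m z₀ hmemU)
  have htendC : Tendsto (fun m => (1 : ℂ) / (lamT m : ℂ)) atTop (nhds z₀) := by
    have h := (Complex.continuous_ofReal.tendsto _).comp htend
    simpa [Function.comp_def, one_div, Complex.ofReal_inv, hz₀def] using h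
  have evm1 : ∀ᶠ m in atTop, (1 : ℂ) / (lamT m : ℂ) ∈ ball z₀ r :=
    htendC (ball_mem_nhds z₀ hr0)
  have evm2 : ∀ᶠ m in atTop, lamT m ≤ 2 * lam₁ := by
    have hlt : 1 / (2 * lam₁) < 1 / lam₁ :=
      one_div_lt_one_div_of_lt hlam₁ (by linarith)
    filter_upwards [htend.eventually (lt_mem_nhds hlt)] with m hm
    have h2 := (div_lt_div_iff₀ (by positivity) (hlamT m)).mp hm
    linarith
  filter_upwards [evm1, evm2] with m hm1 hm2
  set zm : ℂ := 1 / (lamT m : ℂ) with hzmdef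
  have hlamTC : (lamT m : ℂ) ≠ 0 := Complex.ofReal_ne_zero.mpr (hlamT m).ne'
  obtain ⟨hd2zm, hd1zm, hzmR⟩ := hrsub hm1
  have hzmU : zm ∈ U := hRU (ball_subset_closedBall hzmR)
  set E : ℂ := Dm m z₀ - D z₀ with hEdef
  have hE : ‖E‖ ≤ ε m := hbound m z₀ hmemU
  -- bound on D zm
  have hrootm : Dm m zm = 0 := hroots m
  have hDzm : ‖D zm‖ ≤ ε m := by
    have : ‖D zm‖ = ‖Dm m zm - D zm‖ := by rw [hrootm]; simp
    rw [this]; exact hbound m zm hzmU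
  -- key identities
  have key1 : D zm = d1 zm * (zm - z₀) := by
    have h := sub_smul_dslope D z₀ zm
    rw [smul_eq_mul] at h
    have : (zm - z₀) * d1 zm = D zm := by rw [hd1def, h, hroot]; ring
    linear_combination -this
  have key2 : d1 zm = δ + d2 zm * (zm - z₀) := by
    have h := sub_smul_dslope d1 z₀ zm
    rw [smul_eq_mul] at h
    rw [hd1z₀] at h
    linear_combination -h
  -- |zm - z₀| ≤ 2/κ ε
  set x : ℝ := ‖zm - z₀‖ with hxdef
  have hx0 : 0 ≤ x := norm_nonneg _
  have hxε : x ≤ 2 / κ * ε m := by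
    have h1 : κ / 2 * x ≤ ‖D zm‖ := by
      rw [key1, norm_mul]
      exact mul_le_mul_of_nonneg_right hd1zm hx0
    have h2 : x * κ ≤ 2 * ε m := by nlinarith
    rw [div_mul_eq_mul_div, le_div_iff₀ hκ]
    linarith
  -- Lipschitz bound on g := Dm m - D
  have hgdiff : DifferentiableOn ℂ (fun z => Dm m z - D z) (ball z₀ R) :=
    (((hDmN m).sub hDN).differentiableOn).mono
      (fun z hz => hRU (ball_subset_closedBall hz))
  have hgball : ∀ z ∈ ball z₀ R, ‖Dm m z - D z‖ ≤ ε m :=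
    fun z hz => hbound m z (hRU (ball_subset_closedBall hz))
  have hlip : ‖(Dm m zm - D zm) - (Dm m z₀ - D z₀)‖ ≤ 3 * ε m / R * x :=
    lip_of_bound hR0 hgdiff hgball hzmR
  -- error identity
  have herr : δ * ((zm - z₀) + E / δ) =
      -((Dm m zm - D zm) - E) - d2 zm * (zm - z₀) ^ 2 := by
    have h1 : D zm = δ * (zm - z₀) + d2 zm * (zm - z₀) ^ 2 := by
      rw [key1, key2]; ring
    have h3 : δ * ((zm - z₀) + E / δ) = δ * (zm - z₀) + E := by
      field_simp
    rw [h3]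
    linear_combination hrootm - h1
  set er : ℝ := ‖(zm - z₀) + E / δ‖ with herdef
  have her : er ≤ C₂ * ε m ^ 2 := by
    have h1 : κ * er = ‖δ * ((zm - z₀) + E / δ)‖ := by rw [norm_mul]
    have h2 : ‖δ * ((zm - z₀) + E / δ)‖ ≤ 3 * ε m / R * x + M * x ^ 2 := by
      rw [herr]
      calc ‖-((Dm m zm - D zm) - E) - d2 zm * (zm - z₀) ^ 2‖
          ≤ ‖-((Dm m zm - D zm) - E)‖ + ‖d2 zm * (zm - z₀) ^ 2‖ := norm_sub_le _ _
        _ = ‖(Dm m zm - D zm) - E‖ + ‖d2 zm‖ * x ^ 2 := by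
            rw [norm_neg, norm_mul, norm_pow]
        _ ≤ 3 * ε m / R * x + M * x ^ 2 := by
            gcongr
    have t1 : 3 * ε m / R * x ≤ 3 * ε m / R * (2 / κ * ε m) :=
      mul_le_mul_of_nonneg_left hxε
        (div_nonneg (by linarith [hεnn m]) hR0.le)
    have t2 : M * x ^ 2 ≤ M * (2 / κ * ε m) ^ 2 :=
      mul_le_mul_of_nonneg_left (pow_le_pow_left₀ hx0 hxε 2) hM0.le
    have h3 : κ * er ≤ 3 * ε m / R * (2 / κ * ε m) + M * (2 / κ * ε m) ^ 2 := by
      have h12 : κ * er ≤ 3 * ε m / R * x + M * x ^ 2 := h1 ▸ h2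
      linarith
    have h4 : 3 * ε m / R * (2 / κ * ε m) + M * (2 / κ * ε m) ^ 2
        = (κ * C₂) * ε m ^ 2 := by
      rw [hC₂def]; field_simp
    have h5 : κ * er ≤ κ * (C₂ * ε m ^ 2) := by
      calc κ * er ≤ 3 * ε m / R * (2 / κ * ε m) + M * (2 / κ * ε m) ^ 2 := h3
        _ = κ * (C₂ * ε m ^ 2) := by rw [h4]; ring
    exact le_of_mul_le_mul_left h5 hκ
  -- relation between lamT, lam₁ and zm, z₀
  have hlt : (lamT m : ℂ) - (lam₁ : ℂ) = (lamT m : ℂ) * (lam₁ : ℂ) * (z₀ - zm) := by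
    rw [hz₀def, hzmdef]; field_simp
  have hT : ((lamT m : ℂ) - (lam₁ : ℂ))
      - ((lam₁ : ℂ) ^ 2 / δ) * E
      = (lam₁ : ℂ) * ((lamT m : ℂ) - (lam₁ : ℂ)) * (E / δ)
        - (lamT m : ℂ) * (lam₁ : ℂ) * ((zm - z₀) + E / δ) := by
    linear_combination hlt
  -- norms
  have hnlam₁ : ‖(lam₁ : ℂ)‖ = lam₁ := by
    rw [Complex.norm_real, Real.norm_of_nonneg hlam₁.le]
  have hnlamT : ‖(lamT m : ℂ)‖ = lamT m := by
    rw [Complex.norm_real, Real.norm_of_nonneg (hlamT m).le]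
  have hltnorm : ‖(lamT m : ℂ) - (lam₁ : ℂ)‖ ≤ 2 * lam₁ * lam₁ * (2 / κ * ε m) := by
    rw [hlt, norm_mul, norm_mul, hnlam₁, hnlamT, norm_sub_rev]
    have t1 : lamT m * lam₁ ≤ 2 * lam₁ * lam₁ :=
      mul_le_mul_of_nonneg_right hm2 hlam₁.le
    calc lamT m * lam₁ * ‖zm - z₀‖ ≤ (2 * lam₁ * lam₁) * (2 / κ * ε m) :=
          mul_le_mul t1 hxε hx0 (by positivity)
      _ = 2 * lam₁ * lam₁ * (2 / κ * ε m) := by ring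
  have hEδ : ‖E / δ‖ ≤ ε m / κ := by
    rw [norm_div]
    gcongr
  have t3 : lam₁ * ‖(lamT m : ℂ) - (lam₁ : ℂ)‖ * ‖E / δ‖
      ≤ lam₁ * (2 * lam₁ * lam₁ * (2 / κ * ε m)) * (ε m / κ) :=
    mul_le_mul (mul_le_mul_of_nonneg_left hltnorm hlam₁.le) hEδ (norm_nonneg _)
      (mul_nonneg hlam₁.le
        (mul_nonneg (by positivity) (mul_nonneg (by positivity) (hεnn m))))
  have t4 : lamT m * lam₁ * er ≤ (2 * lam₁) * lam₁ * (C₂ * ε m ^ 2) :=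
    mul_le_mul (mul_le_mul_of_nonneg_right hm2 hlam₁.le) her (norm_nonneg _)
      (by positivity)
  calc ‖((lamT m : ℂ) - (lam₁ : ℂ)) - ((lam₁ : ℂ) ^ 2 / δ) * E‖
      = ‖(lam₁ : ℂ) * ((lamT m : ℂ) - (lam₁ : ℂ)) * (E / δ)
        - (lamT m : ℂ) * (lam₁ : ℂ) * ((zm - z₀) + E / δ)‖ := by rw [← hT]
    _ ≤ ‖(lam₁ : ℂ) * ((lamT m : ℂ) - (lam₁ : ℂ)) * (E / δ)‖
        + ‖(lamT m : ℂ) * (lam₁ : ℂ) * ((zm - z₀) + E / δ)‖ := norm_sub_le _ _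
    _ = lam₁ * ‖(lamT m : ℂ) - (lam₁ : ℂ)‖ * ‖E / δ‖ + lamT m * lam₁ * er := by
        rw [norm_mul, norm_mul, norm_mul, norm_mul, hnlam₁, hnlamT]
    _ ≤ lam₁ * (2 * lam₁ * lam₁ * (2 / κ * ε m)) * (ε m / κ)
        + (2 * lam₁) * lam₁ * (C₂ * ε m ^ 2) := add_le_add t3 t4
    _ = (lam₁ * (2 * lam₁ * lam₁ * (2 / κ)) * (1 / κ) + 2 * lam₁ * lam₁ * C₂) * ε m ^ 2 := by
        ring
end
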